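/- Let f : ℂ → ℂ be an entire function and let 0 < s < t. Then log(t/s) · S(f, D(0,t)) ≥ m(t,f) − m(s,f) − log 2. -/

import Mathlib

open MeasureTheory

/-- The spherical area `S(f, U) = (1/π) ∫_U |f'|²/(1+|f|²)² dA`. -/
noncomputable def sphArea (f : ℂ → ℂ) (U : Set ℂ) : ℝ :=
  (1 / Real.pi) * ∫ z in U, ‖deriv f z‖ ^ 2 / (1 + ‖f z‖ ^ 2) ^ 2

/-- The positive part of the logarithm, `log⁺ x = max (log x) 0`. -/
noncomputable def posLog (x : ℝ) : ℝ := max (Real.log x) 0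

/-- The Nevanlinna proximity function
`m(r, f) = (1/2π) ∫₀^{2π} log⁺ |f(r e^{iθ})| dθ`. -/
noncomputable def proximity (f : ℂ → ℂ) (r : ℝ) : ℝ :=
  (1 / (2 * Real.pi)) *
    ∫ θ in (0 : ℝ)..(2 * Real.pi), posLog ‖f (r * Complex.exp (θ * Complex.I))‖



open MeasureTheory Complex

noncomputable section

variable {f : ℂ → ℂ}

/-- derivative of `normSq ∘ w` along a real curve -/
theorem hasDerivAt_normSq_comp {w : ℝ → ℂ} {w' : ℂ} {x : ℝ} (hw : HasDerivAt w w' x) :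
    HasDerivAt (fun x => Complex.normSq (w x)) (2 * ((starRingEnd ℂ) (w x) * w').re) x := by
  have hre : HasDerivAt (fun x => (w x).re) w'.re x :=
    (Complex.reCLM.hasFDerivAt.comp_hasDerivAt x hw)
  have him : HasDerivAt (fun x => (w x).im) w'.im x :=
    (Complex.imCLM.hasFDerivAt.comp_hasDerivAt x hw)
  have h := (hre.mul hre).add (him.mul him)
  have h2 : HasDerivAt (fun x => Complex.normSq (w x))
      (w'.re * (w x).re + (w x).re * w'.re + (w'.im * (w x).im + (w x).im * w'.im)) x := by
    simp only [Complex.normSq_apply]; exact h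
  convert h2 using 1
  simp [Complex.mul_re]
  ring

/-- derivative of `conj ∘ w` -/
theorem hasDerivAt_conj_comp {w : ℝ → ℂ} {w' : ℂ} {x : ℝ} (hw : HasDerivAt w w' x) :
    HasDerivAt (fun x => (starRingEnd ℂ) (w x)) ((starRingEnd ℂ) w') x :=
  Complex.conjCLE.toContinuousLinearMap.hasFDerivAt.comp_hasDerivAt x hw

/-- derivative of `re ∘ w` -/
theorem hasDerivAt_re_comp {w : ℝ → ℂ} {w' : ℂ} {x : ℝ} (hw : HasDerivAt w w' x) :
    HasDerivAt (fun x => (w x).re) w'.re x :=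
  Complex.reCLM.hasFDerivAt.comp_hasDerivAt x hw

/-- composition of entire function with real curve -/
theorem hasDerivAt_holo_comp (hf : Differentiable ℂ f) {γ : ℝ → ℂ} {γ' : ℂ} {x : ℝ}
    (hγ : HasDerivAt γ γ' x) :
    HasDerivAt (fun x => f (γ x)) (γ' • deriv f (γ x)) x :=
  (hf (γ x)).hasDerivAt.scomp x hγ

end
noncomputable section

open Complex

/-- First-order coefficient: directional derivative of `u = ½ log(1+|f|²)`. -/
def Bf (f : ℂ → ℂ) (z v : ℂ) : ℝ :=
  ((starRingEnd ℂ) (f z) * deriv f z * v).re / (1 + normSq (f z))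

/-- Second-order coefficient. -/
def Sf (f : ℂ → ℂ) (z v w : ℂ) : ℝ :=
  (((starRingEnd ℂ) (deriv f z * w) * (deriv f z * v)
      + (starRingEnd ℂ) (f z) * deriv (deriv f) z * w * v).re * (1 + normSq (f z))
    - ((starRingEnd ℂ) (f z) * deriv f z * v).re
        * (2 * ((starRingEnd ℂ) (f z) * deriv f z * w).re))
    / (1 + normSq (f z)) ^ 2

theorem den_pos (f : ℂ → ℂ) (z : ℂ) : 0 < 1 + normSq (f z) := by
  have := normSq_nonneg (f z); linarith

theorem keyA {f : ℂ → ℂ} (hf : Differentiable ℂ f) {γ : ℝ → ℂ} {γ' : ℂ} {x : ℝ}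
    (hγ : HasDerivAt γ γ' x) :
    HasDerivAt (fun x => (1 / 2 : ℝ) * Real.log (1 + normSq (f (γ x)))) (Bf f (γ x) γ') x := by
  have hc : HasDerivAt (fun x => f (γ x)) (γ' • deriv f (γ x)) x := hasDerivAt_holo_comp hf hγ
  have hn : HasDerivAt (fun x => Complex.normSq (f (γ x)))
      (2 * ((starRingEnd ℂ) (f (γ x)) * (γ' • deriv f (γ x))).re) x := hasDerivAt_normSq_comp hc
  have hd : HasDerivAt (fun x => 1 + Complex.normSq (f (γ x)))
      (2 * ((starRingEnd ℂ) (f (γ x)) * (γ' • deriv f (γ x))).re) x := by exact hn.const_add 1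
  have hlog := (hd.log (ne_of_gt (den_pos f (γ x)))).const_mul (1 / 2 : ℝ)
  refine hlog.congr_deriv ?_
  symm
  unfold Bf
  have : (starRingEnd ℂ) (f (γ x)) * (γ' • deriv f (γ x))
      = (starRingEnd ℂ) (f (γ x)) * deriv f (γ x) * γ' := by
    simp [smul_eq_mul]; ring
  rw [this]
  field_simp

theorem keyB {f : ℂ → ℂ} (hf : Differentiable ℂ f) (hf1 : Differentiable ℂ (deriv f))
    {γ ω : ℝ → ℂ} {γ' ω' : ℂ} {x : ℝ} (hγ : HasDerivAt γ γ' x) (hω : HasDerivAt ω ω' x) :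
    HasDerivAt (fun x => Bf f (γ x) (ω x)) (Sf f (γ x) (ω x) γ' + Bf f (γ x) ω') x := by
  have hc : HasDerivAt (fun x => f (γ x)) (γ' • deriv f (γ x)) x := hasDerivAt_holo_comp hf hγ
  have hb : HasDerivAt (fun x => deriv f (γ x)) (γ' • deriv (deriv f) (γ x)) x :=
    hasDerivAt_holo_comp hf1 hγ
  have hconj : HasDerivAt (fun x => (starRingEnd ℂ) (f (γ x)))
      ((starRingEnd ℂ) (γ' • deriv f (γ x))) x := hasDerivAt_conj_comp hc
  have hnum : HasDerivAt (fun x => ((starRingEnd ℂ) (f (γ x)) * deriv f (γ x) * ω x).re)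
      ((((starRingEnd ℂ) (γ' • deriv f (γ x)) * deriv f (γ x)
          + (starRingEnd ℂ) (f (γ x)) * (γ' • deriv (deriv f) (γ x))) * ω x
        + (starRingEnd ℂ) (f (γ x)) * deriv f (γ x) * ω').re) x :=
    hasDerivAt_re_comp (((hconj.mul hb).mul hω))
  have hden : HasDerivAt (fun x => 1 + Complex.normSq (f (γ x)))
      (2 * ((starRingEnd ℂ) (f (γ x)) * (γ' • deriv f (γ x))).re) x :=
    by exact (hasDerivAt_normSq_comp hc).const_add 1
  have h := hnum.div hden (ne_of_gt (den_pos f (γ x)))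
  refine h.congr_deriv ?_
  symm
  have hD := ne_of_gt (den_pos f (γ x))
  unfold Sf Bf
  rw [show ((starRingEnd ℂ) (γ' • deriv f (γ x)) * deriv f (γ x)
          + (starRingEnd ℂ) (f (γ x)) * (γ' • deriv (deriv f) (γ x))) * ω x
        + (starRingEnd ℂ) (f (γ x)) * deriv f (γ x) * ω'
      = ((starRingEnd ℂ) (deriv f (γ x) * γ') * (deriv f (γ x) * ω x)
          + (starRingEnd ℂ) (f (γ x)) * deriv (deriv f) (γ x) * γ' * ω x)
        + (starRingEnd ℂ) (f (γ x)) * deriv f (γ x) * ω' from by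
        simp only [smul_eq_mul, map_mul]; ring,
    show (starRingEnd ℂ) (f (γ x)) * (γ' • deriv f (γ x))
      = (starRingEnd ℂ) (f (γ x)) * deriv f (γ x) * γ' from by
        simp only [smul_eq_mul]; ring]
  rw [Complex.add_re]
  simp only [Complex.add_re]
  field_simp
  ring

theorem sum_Sf (f : ℂ → ℂ) (z v : ℂ) :
    Sf f z v v + Sf f z (Complex.I * v) (Complex.I * v)
      = normSq v * (2 * normSq (deriv f z) / (1 + normSq (f z)) ^ 2) := by
  have hD : (1 + normSq (f z)) ≠ 0 := by have := normSq_nonneg (f z); positivity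
  unfold Sf
  simp only [Complex.mul_re, Complex.mul_im, Complex.conj_re, Complex.conj_im,
    Complex.normSq_apply, Complex.I_re, Complex.I_im, Complex.add_re, Complex.add_im]
  field_simp
  ring

 section helpers2
open MeasureTheory intervalIntegral

/-- Continuity of a parametric interval integral with jointly continuous integrand. -/
theorem cont_param_integral {F : ℝ → ℝ → ℝ} (hF : Continuous fun p : ℝ × ℝ => F p.1 p.2)
    (a b : ℝ) : Continuous fun x => ∫ θ in a..b, F x θ := by
  rw [continuous_iff_continuousAt]
  intro x₀
  obtain ⟨C, hC⟩ := (isCompact_closedBall x₀ 1 |>.prod (isCompact_uIcc (a := a) (b := b))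
    ).exists_bound_of_continuousOn hF.continuousOn
  apply intervalIntegral.continuousAt_of_dominated_interval (bound := fun _ => C)
  · filter_upwards with x
    exact ((hF.comp (Continuous.prodMk_right x)).aestronglyMeasurable).restrict
  · filter_upwards [Metric.closedBall_mem_nhds_of_mem (by simp : x₀ ∈ Metric.ball x₀ 1)]
      with x hx
    filter_upwards with θ hθ
    exact hC (x, θ) ⟨hx, Set.uIoc_subset_uIcc hθ⟩
  · exact intervalIntegrable_const
  · filter_upwards with θ _
    exact (hF.comp (continuous_id.prodMk continuous_const)).continuousAt

/-- Differentiation under the interval integral, continuous version. -/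
theorem hasDerivAt_param_integral {F F' : ℝ → ℝ → ℝ}
    (hF : Continuous fun p : ℝ × ℝ => F p.1 p.2)
    (hF' : Continuous fun p : ℝ × ℝ => F' p.1 p.2)
    (hd : ∀ x θ, HasDerivAt (fun x => F x θ) (F' x θ) x) (a b x₀ : ℝ) :
    HasDerivAt (fun x => ∫ θ in a..b, F x θ) (∫ θ in a..b, F' x₀ θ) x₀ := by
  obtain ⟨C, hC⟩ := (isCompact_closedBall x₀ 1 |>.prod (isCompact_uIcc (a := a) (b := b))
    ).exists_bound_of_continuousOn hF'.continuousOn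
  refine (intervalIntegral.hasDerivAt_integral_of_dominated_loc_of_deriv_le
    (s := Metric.ball x₀ 1) (bound := fun _ => C) (Metric.ball_mem_nhds x₀ one_pos) ?_ ?_ ?_ ?_ ?_ ?_).2
  · filter_upwards with x
    exact ((hF.comp (Continuous.prodMk_right x)).aestronglyMeasurable).restrict
  · exact ((hF.comp (Continuous.prodMk_right x₀)).intervalIntegrable a b)
  · exact ((hF'.comp (Continuous.prodMk_right x₀)).aestronglyMeasurable).restrict
  · filter_upwards with θ hθ x hx
    exact hC (x, θ) ⟨Metric.ball_subset_closedBall hx, Set.uIoc_subset_uIcc hθ⟩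
  · exact intervalIntegrable_const
  · filter_upwards with θ hθ x hx
    exact hd x θ

end helpers2
section analytic
open MeasureTheory intervalIntegral Complex Real

noncomputable def ee (θ : ℝ) : ℂ := Complex.exp (θ * Complex.I)
noncomputable def cc (ρ θ : ℝ) : ℂ := (ρ : ℂ) * ee θ
noncomputable def uf (f : ℂ → ℂ) (z : ℂ) : ℝ := (1 / 2 : ℝ) * Real.log (1 + normSq (f z))
noncomputable def Lf (f : ℂ → ℂ) (z : ℂ) : ℝ := 2 * normSq (deriv f z) / (1 + normSq (f z)) ^ 2
noncomputable def Ff (f : ℂ → ℂ) (ρ : ℝ) : ℝ := ∫ θ in (0:ℝ)..(2*π), uf f (cc ρ θ)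
noncomputable def Gf (f : ℂ → ℂ) (ρ : ℝ) : ℝ := ∫ θ in (0:ℝ)..(2*π), Bf f (cc ρ θ) (ee θ)
noncomputable def Hf (f : ℂ → ℂ) (ρ : ℝ) : ℝ :=
  ∫ θ in (0:ℝ)..(2*π), Sf f (cc ρ θ) (ee θ) (ee θ)
noncomputable def psif (f : ℂ → ℂ) (ρ : ℝ) : ℝ := ρ * ∫ θ in (0:ℝ)..(2*π), Lf f (cc ρ θ)

theorem hasDerivAt_cc_rho (θ : ℝ) (ρ : ℝ) : HasDerivAt (fun ρ => cc ρ θ) (ee θ) ρ := by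
  have h : HasDerivAt (fun ρ : ℝ => (ρ : ℂ)) 1 ρ := by
    simpa using (hasDerivAt_id ρ).ofReal_comp
  simpa [cc] using h.mul_const (ee θ)

theorem hasDerivAt_ee (θ : ℝ) : HasDerivAt ee (Complex.I * ee θ) θ := by
  have h : HasDerivAt (fun θ : ℝ => (θ : ℂ)) 1 θ := by
    simpa using (hasDerivAt_id θ).ofReal_comp
  have h2 := (h.mul_const Complex.I).cexp
  refine h2.congr_deriv ?_
  unfold ee; ring

theorem hasDerivAt_cc_theta (ρ : ℝ) (θ : ℝ) :
    HasDerivAt (fun θ => cc ρ θ) ((ρ : ℂ) * (Complex.I * ee θ)) θ := by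
  simpa [cc] using ((hasDerivAt_ee θ).const_mul (ρ : ℂ))

theorem cont_ee : Continuous ee :=
  Complex.continuous_exp.comp (Complex.continuous_ofReal.mul continuous_const)

theorem cont_cc : Continuous fun p : ℝ × ℝ => cc p.1 p.2 :=
  (Complex.continuous_ofReal.comp continuous_fst).mul (cont_ee.comp continuous_snd)

variable {f : ℂ → ℂ}

theorem cont_Bf_comp (hf : Differentiable ℂ f) (hf1 : Differentiable ℂ (deriv f))
    {α : Type*} [TopologicalSpace α] {z v : α → ℂ} (hz : Continuous z) (hv : Continuous v) :
    Continuous fun x => Bf f (z x) (v x) := by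
  unfold Bf
  exact (Complex.continuous_re.comp
      ((((Complex.continuous_conj.comp (hf.continuous.comp hz)).mul
        (hf1.continuous.comp hz)).mul hv))).div
    (continuous_const.add (Complex.continuous_normSq.comp (hf.continuous.comp hz)))
    (fun x => ne_of_gt (den_pos f (z x)))

theorem cont_Sf_comp (hf : Differentiable ℂ f) (hf1 : Differentiable ℂ (deriv f))
    (hf2 : Differentiable ℂ (deriv (deriv f)))
    {α : Type*} [TopologicalSpace α] {z v w : α → ℂ} (hz : Continuous z) (hv : Continuous v)
    (hw : Continuous w) : Continuous fun x => Sf f (z x) (v x) (w x) := by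
  unfold Sf
  apply Continuous.div
  · apply Continuous.sub
    · exact (Complex.continuous_re.comp
        (((Complex.continuous_conj.comp ((hf1.continuous.comp hz).mul hw)).mul
            ((hf1.continuous.comp hz).mul hv)).add
          ((((Complex.continuous_conj.comp (hf.continuous.comp hz)).mul
            (hf2.continuous.comp hz)).mul hw).mul hv))).mul
        (continuous_const.add (Complex.continuous_normSq.comp (hf.continuous.comp hz)))
    · exact (Complex.continuous_re.comp
        (((Complex.continuous_conj.comp (hf.continuous.comp hz)).mul
          (hf1.continuous.comp hz)).mul hv)).mul
        (continuous_const.mul (Complex.continuous_re.comp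
          (((Complex.continuous_conj.comp (hf.continuous.comp hz)).mul
            (hf1.continuous.comp hz)).mul hw)))
  · exact (continuous_const.add (Complex.continuous_normSq.comp (hf.continuous.comp hz))).pow 2
  · exact fun x => pow_ne_zero 2 (ne_of_gt (den_pos f (z x)))

theorem cont_Lf_comp (hf : Differentiable ℂ f) (hf1 : Differentiable ℂ (deriv f))
    {α : Type*} [TopologicalSpace α] {z : α → ℂ} (hz : Continuous z) :
    Continuous fun x => Lf f (z x) := by
  unfold Lf
  exact (continuous_const.mul (Complex.continuous_normSq.comp (hf1.continuous.comp hz))).div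
    ((continuous_const.add (Complex.continuous_normSq.comp (hf.continuous.comp hz))).pow 2)
    (fun x => pow_ne_zero 2 (ne_of_gt (den_pos f (z x))))

theorem cont_uf_comp (hf : Differentiable ℂ f)
    {α : Type*} [TopologicalSpace α] {z : α → ℂ} (hz : Continuous z) :
    Continuous fun x => uf f (z x) := by
  unfold uf
  exact continuous_const.mul ((continuous_const.add
    (Complex.continuous_normSq.comp (hf.continuous.comp hz))).log
    (fun x => ne_of_gt (den_pos f (z x))))

end analytic
section analytic2
open MeasureTheory intervalIntegral Complex Real

variable {f : ℂ → ℂ}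

theorem hFderiv (hf : Differentiable ℂ f) (hf1 : Differentiable ℂ (deriv f)) (ρ : ℝ) :
    HasDerivAt (Ff f) (Gf f ρ) ρ := by
  unfold Ff Gf
  exact hasDerivAt_param_integral
    (F := fun x θ => uf f (cc x θ)) (F' := fun x θ => Bf f (cc x θ) (ee θ))
    (cont_uf_comp hf cont_cc)
    (cont_Bf_comp hf hf1 cont_cc (cont_ee.comp continuous_snd))
    (fun x θ => by simpa [uf] using keyA hf (hasDerivAt_cc_rho θ x)) 0 (2*π) ρ

theorem Bf_zero (z : ℂ) : Bf f z 0 = 0 := by simp [Bf]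

theorem hGderiv (hf : Differentiable ℂ f) (hf1 : Differentiable ℂ (deriv f))
    (hf2 : Differentiable ℂ (deriv (deriv f))) (ρ : ℝ) :
    HasDerivAt (Gf f) (Hf f ρ) ρ := by
  unfold Gf Hf
  exact hasDerivAt_param_integral
    (F := fun x θ => Bf f (cc x θ) (ee θ)) (F' := fun x θ => Sf f (cc x θ) (ee θ) (ee θ))
    (cont_Bf_comp hf hf1 cont_cc (cont_ee.comp continuous_snd))
    (cont_Sf_comp hf hf1 hf2 cont_cc (cont_ee.comp continuous_snd)
      (cont_ee.comp continuous_snd))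
    (fun x θ => by
      have h := keyB hf hf1 (hasDerivAt_cc_rho θ x) (hasDerivAt_const x (ee θ))
      simpa [Bf_zero] using h) 0 (2*π) ρ

theorem Bf_smul (z v : ℂ) (r : ℝ) : Bf f z ((r : ℂ) * v) = r * Bf f z v := by
  unfold Bf
  rw [show (starRingEnd ℂ) (f z) * deriv f z * ((r:ℂ) * v)
      = (r:ℂ) * ((starRingEnd ℂ) (f z) * deriv f z * v) from by ring]
  simp [Complex.mul_re, mul_div_assoc]

theorem Sf_smul (z v w : ℂ) (r : ℝ) :
    Sf f z ((r : ℂ) * v) ((r : ℂ) * w) = r ^ 2 * Sf f z v w := by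
  unfold Sf
  rw [show deriv f z * ((r:ℂ) * w) = (r:ℂ) * (deriv f z * w) from by ring, map_mul,
    show (starRingEnd ℂ) (r:ℂ) * (starRingEnd ℂ) (deriv f z * w) * (deriv f z * ((r:ℂ)*v))
      = ((r:ℂ) * (r:ℂ)) * ((starRingEnd ℂ) (deriv f z * w) * (deriv f z * v)) from by
      simp [Complex.conj_ofReal]; ring,
    show (starRingEnd ℂ) (f z) * deriv (deriv f) z * ((r:ℂ)*w) * ((r:ℂ)*v)
      = ((r:ℂ) * (r:ℂ)) * ((starRingEnd ℂ) (f z) * deriv (deriv f) z * w * v) from by ring,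
    ← mul_add,
    show (starRingEnd ℂ) (f z) * deriv f z * ((r:ℂ)*v)
      = (r:ℂ) * ((starRingEnd ℂ) (f z) * deriv f z * v) from by ring,
    show (starRingEnd ℂ) (f z) * deriv f z * ((r:ℂ)*w)
      = (r:ℂ) * ((starRingEnd ℂ) (f z) * deriv f z * w) from by ring]
  push_cast
  simp only [Complex.mul_re, Complex.ofReal_re, Complex.ofReal_im, Complex.mul_im]
  field_simp
  ring

theorem normSq_ee (θ : ℝ) : normSq (ee θ) = 1 := by
  have := Complex.norm_exp_ofReal_mul_I θ
  rw [Complex.normSq_eq_norm_sq]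
  simp [ee, this]

theorem ee_two_pi : ee (2 * π) = ee 0 := by
  unfold ee
  push_cast
  simp [Complex.exp_two_pi_mul_I]

end analytic2
section analytic3
open MeasureTheory intervalIntegral Complex Real

variable {f : ℂ → ℂ}

theorem theta_FTC (hf : Differentiable ℂ f) (hf1 : Differentiable ℂ (deriv f))
    (hf2 : Differentiable ℂ (deriv (deriv f))) (ρ : ℝ) :
    ∫ θ in (0:ℝ)..(2*π),
      (Sf f (cc ρ θ) ((ρ:ℂ) * (Complex.I * ee θ)) ((ρ:ℂ) * (Complex.I * ee θ))
        + Bf f (cc ρ θ) (-((ρ:ℂ) * ee θ))) = 0 := by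
  have hk : ∀ θ : ℝ, HasDerivAt (fun θ => Bf f (cc ρ θ) ((ρ:ℂ) * (Complex.I * ee θ)))
      (Sf f (cc ρ θ) ((ρ:ℂ) * (Complex.I * ee θ)) ((ρ:ℂ) * (Complex.I * ee θ))
        + Bf f (cc ρ θ) (-((ρ:ℂ) * ee θ))) θ := by
    intro θ
    have hω : HasDerivAt (fun θ : ℝ => (ρ:ℂ) * (Complex.I * ee θ)) (-((ρ:ℂ) * ee θ)) θ := by
      have := ((hasDerivAt_ee θ).const_mul Complex.I).const_mul (ρ:ℂ)
      refine this.congr_deriv ?_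
      symm
      rw [show Complex.I * (Complex.I * ee θ) = -ee θ from by
        rw [← mul_assoc, Complex.I_mul_I]; ring]
      ring
    exact keyB hf hf1 (hasDerivAt_cc_theta ρ θ) hω
  have hcont : Continuous fun θ =>
      Sf f (cc ρ θ) ((ρ:ℂ) * (Complex.I * ee θ)) ((ρ:ℂ) * (Complex.I * ee θ))
        + Bf f (cc ρ θ) (-((ρ:ℂ) * ee θ)) := by
    have hc : Continuous fun θ : ℝ => cc ρ θ := cont_cc.comp (continuous_const.prodMk
      continuous_id)
    have hv : Continuous fun θ : ℝ => (ρ:ℂ) * (Complex.I * ee θ) :=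
      continuous_const.mul (continuous_const.mul cont_ee)
    have hv2 : Continuous fun θ : ℝ => -((ρ:ℂ) * ee θ) := (continuous_const.mul cont_ee).neg
    exact (cont_Sf_comp hf hf1 hf2 hc hv hv).add (cont_Bf_comp hf hf1 hc hv2)
  rw [intervalIntegral.integral_eq_sub_of_hasDerivAt (fun θ _ => hk θ)
    (hcont.intervalIntegrable _ _)]
  rw [show cc ρ (2*π) = cc ρ 0 from by unfold cc; rw [ee_two_pi], ee_two_pi]
  ring

theorem GH_identity (hf : Differentiable ℂ f) (hf1 : Differentiable ℂ (deriv f))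
    (hf2 : Differentiable ℂ (deriv (deriv f))) {ρ : ℝ} (hρ : ρ ≠ 0) :
    Gf f ρ + ρ * Hf f ρ = psif f ρ := by
  have hc : Continuous fun θ : ℝ => cc ρ θ :=
    cont_cc.comp (continuous_const.prodMk continuous_id)
  have hSI : Continuous fun θ : ℝ => Sf f (cc ρ θ) (Complex.I * ee θ) (Complex.I * ee θ) :=
    cont_Sf_comp hf hf1 hf2 hc (continuous_const.mul cont_ee) (continuous_const.mul cont_ee)
  have hBc : Continuous fun θ : ℝ => Bf f (cc ρ θ) (ee θ) := cont_Bf_comp hf hf1 hc cont_ee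
  -- from theta_FTC : ∫ (ρ² S(Iv)(Iv) - ρ B(v)) = 0
  have h0 := theta_FTC hf hf1 hf2 (f := f) ρ
  have heq : ∀ θ : ℝ,
      Sf f (cc ρ θ) ((ρ:ℂ) * (Complex.I * ee θ)) ((ρ:ℂ) * (Complex.I * ee θ))
        + Bf f (cc ρ θ) (-((ρ:ℂ) * ee θ))
      = ρ ^ 2 * Sf f (cc ρ θ) (Complex.I * ee θ) (Complex.I * ee θ)
        - ρ * Bf f (cc ρ θ) (ee θ) := by
    intro θ
    rw [Sf_smul, show -((ρ:ℂ) * ee θ) = ((-ρ : ℝ) : ℂ) * ee θ from by push_cast; ring, Bf_smul]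
    ring
  rw [intervalIntegral.integral_congr (g := fun θ =>
      ρ ^ 2 * Sf f (cc ρ θ) (Complex.I * ee θ) (Complex.I * ee θ)
        - ρ * Bf f (cc ρ θ) (ee θ)) (fun θ _ => heq θ)] at h0
  rw [intervalIntegral.integral_sub ((show Continuous fun θ =>
      ρ ^ 2 * Sf f (cc ρ θ) (Complex.I * ee θ) (Complex.I * ee θ) from
        continuous_const.mul hSI).intervalIntegrable _ _)
    ((show Continuous fun θ =>
      ρ * Bf f (cc ρ θ) (ee θ) from continuous_const.mul hBc).intervalIntegrable _ _),
    intervalIntegral.integral_const_mul, intervalIntegral.integral_const_mul] at h0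
  -- h0 : ρ^2 * ∫ S(Iv)(Iv) - ρ * ∫ B = 0
  have hIv : ρ * ∫ θ in (0:ℝ)..(2*π), Sf f (cc ρ θ) (Complex.I * ee θ) (Complex.I * ee θ)
      = Gf f ρ := by
    unfold Gf
    have h2 : ρ ^ 2 * ∫ θ in (0:ℝ)..(2*π), Sf f (cc ρ θ) (Complex.I * ee θ) (Complex.I * ee θ)
        = ρ * ∫ θ in (0:ℝ)..(2*π), Bf f (cc ρ θ) (ee θ) := by linarith
    apply mul_left_cancel₀ hρ
    rw [show ρ * (ρ * ∫ θ in (0:ℝ)..(2*π),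
          Sf f (cc ρ θ) (Complex.I * ee θ) (Complex.I * ee θ))
        = ρ ^ 2 * ∫ θ in (0:ℝ)..(2*π), Sf f (cc ρ θ) (Complex.I * ee θ) (Complex.I * ee θ)
        from by ring, h2]
  -- now psif
  have hLsum : ∀ θ : ℝ, Lf f (cc ρ θ)
      = Sf f (cc ρ θ) (ee θ) (ee θ) + Sf f (cc ρ θ) (Complex.I * ee θ) (Complex.I * ee θ) := by
    intro θ
    have := sum_Sf f (cc ρ θ) (ee θ)
    rw [normSq_ee] at this
    rw [this]
    unfold Lf
    ring
  unfold psif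
  rw [intervalIntegral.integral_congr (g := fun θ =>
      Sf f (cc ρ θ) (ee θ) (ee θ) + Sf f (cc ρ θ) (Complex.I * ee θ) (Complex.I * ee θ))
      (fun θ _ => hLsum θ),
    intervalIntegral.integral_add
      ((cont_Sf_comp hf hf1 hf2 hc cont_ee cont_ee).intervalIntegrable _ _)
      (hSI.intervalIntegrable _ _)]
  unfold Hf
  rw [← hIv]
  ring

end analytic3
section analytic4
open MeasureTheory intervalIntegral Complex Real

variable {f : ℂ → ℂ}

theorem Lf_nonneg (z : ℂ) : 0 ≤ Lf f z := by
  unfold Lf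
  have := normSq_nonneg (deriv f z)
  have := den_pos f z
  positivity

theorem psif_nonneg {ρ : ℝ} (hρ : 0 ≤ ρ) : 0 ≤ psif f ρ := by
  unfold psif
  have h2pi : (0:ℝ) ≤ 2 * π := by positivity
  exact mul_nonneg hρ (intervalIntegral.integral_nonneg h2pi (fun u _ => Lf_nonneg _))

theorem cont_psif (hf : Differentiable ℂ f) (hf1 : Differentiable ℂ (deriv f)) :
    Continuous (psif f) := by
  unfold psif
  exact continuous_id.mul (cont_param_integral
    (F := fun x θ => Lf f (cc x θ)) (cont_Lf_comp hf hf1 cont_cc) 0 (2*π))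

theorem hPhideriv (hf : Differentiable ℂ f) (hf1 : Differentiable ℂ (deriv f))
    (hf2 : Differentiable ℂ (deriv (deriv f))) {ρ : ℝ} (hρ : ρ ≠ 0) :
    HasDerivAt (fun ρ => ρ * Gf f ρ) (psif f ρ) ρ := by
  have h := (hasDerivAt_id ρ).mul (hGderiv hf hf1 hf2 ρ)
  simp only [id_eq, one_mul] at h
  rwa [GH_identity hf hf1 hf2 hρ] at h

theorem Phi_FTC (hf : Differentiable ℂ f) (hf1 : Differentiable ℂ (deriv f))
    (hf2 : Differentiable ℂ (deriv (deriv f))) {a b : ℝ} (ha : 0 < a) (hab : a ≤ b) :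
    b * Gf f b - a * Gf f a = ∫ ρ in a..b, psif f ρ := by
  symm
  apply intervalIntegral.integral_eq_sub_of_hasDerivAt
  · intro x hx
    rw [Set.uIcc_of_le hab] at hx
    exact hPhideriv hf hf1 hf2 (ne_of_gt (lt_of_lt_of_le ha hx.1))
  · exact (cont_psif hf hf1).intervalIntegrable _ _

theorem cont_Gf (hf : Differentiable ℂ f) (hf1 : Differentiable ℂ (deriv f)) :
    Continuous (Gf f) := by
  unfold Gf
  exact cont_param_integral (F := fun x θ => Bf f (cc x θ) (ee θ))
    (cont_Bf_comp hf hf1 cont_cc (cont_ee.comp continuous_snd)) 0 (2*π)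

theorem Phi_eq (hf : Differentiable ℂ f) (hf1 : Differentiable ℂ (deriv f))
    (hf2 : Differentiable ℂ (deriv (deriv f))) {t : ℝ} (ht : 0 < t) :
    t * Gf f t = ∫ ρ in (0:ℝ)..t, psif f ρ := by
  have hcont : Continuous fun ε => t * Gf f t - ε * Gf f ε :=
    continuous_const.sub (continuous_id.mul (cont_Gf hf hf1))
  have h1 : Filter.Tendsto (fun ε => t * Gf f t - ε * Gf f ε) (nhdsWithin 0 (Set.Ioi 0))
      (nhds (t * Gf f t)) := by
    have := hcont.tendsto 0
    simp only [zero_mul, sub_zero] at this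
    exact this.mono_left nhdsWithin_le_nhds
  have hint : ∀ a b : ℝ, IntervalIntegrable (psif f) MeasureTheory.volume a b :=
    fun a b => (cont_psif hf hf1).intervalIntegrable a b
  have h2 : Filter.Tendsto (fun ε => ∫ ρ in ε..t, psif f ρ) (nhdsWithin 0 (Set.Ioi 0))
      (nhds (∫ ρ in (0:ℝ)..t, psif f ρ)) := by
    have hc : Continuous fun ε => ∫ ρ in ε..t, psif f ρ := by
      have h3 : Continuous fun ε => -∫ ρ in t..ε, psif f ρ :=
        (intervalIntegral.continuous_primitive hint t).neg
      have h4 : (fun ε => ∫ ρ in ε..t, psif f ρ) = fun ε => -∫ ρ in t..ε, psif f ρ :=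
        funext fun ε => by rw [intervalIntegral.integral_symm]
      rw [h4]; exact h3
    exact (hc.tendsto 0).mono_left nhdsWithin_le_nhds
  have heq : ∀ᶠ ε in nhdsWithin 0 (Set.Ioi 0),
      t * Gf f t - ε * Gf f ε = ∫ ρ in ε..t, psif f ρ := by
    filter_upwards [Ioo_mem_nhdsGT_of_mem (by constructor <;> [rfl; exact ht] : (0:ℝ) ∈ Set.Ico 0 t)]
      with ε hε
    exact Phi_FTC hf hf1 hf2 hε.1 (le_of_lt hε.2)
  have := Filter.Tendsto.congr' heq h1
  have hT := tendsto_nhds_unique this h2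
  linarith [hT]

end analytic4
section analytic5
open MeasureTheory intervalIntegral Complex Real

variable {f : ℂ → ℂ}

theorem Ff_diff_le (hf : Differentiable ℂ f) (hf1 : Differentiable ℂ (deriv f))
    (hf2 : Differentiable ℂ (deriv (deriv f))) {s t : ℝ} (hs : 0 < s) (hst : s < t) :
    Ff f t - Ff f s ≤ (t * Gf f t) * (Real.log t - Real.log s) := by
  have ht : 0 < t := lt_trans hs hst
  have hFTC : Ff f t - Ff f s = ∫ ρ in s..t, Gf f ρ := by
    symm
    apply intervalIntegral.integral_eq_sub_of_hasDerivAt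
    · exact fun x _ => hFderiv hf hf1 x
    · exact (cont_Gf hf hf1).intervalIntegrable _ _
  have hmono : ∀ ρ ∈ Set.Icc s t, Gf f ρ ≤ (t * Gf f t) * ρ⁻¹ := by
    intro ρ hρ
    have hρ0 : 0 < ρ := lt_of_lt_of_le hs hρ.1
    have hΦ : ρ * Gf f ρ ≤ t * Gf f t := by
      have h := Phi_FTC hf hf1 hf2 hρ0 hρ.2
      have hnn : 0 ≤ ∫ x in ρ..t, psif f x :=
        intervalIntegral.integral_nonneg hρ.2 (fun u hu => psif_nonneg (le_trans
          (le_of_lt hρ0) hu.1))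
      linarith
    rw [show (t * Gf f t) * ρ⁻¹ = (t * Gf f t) / ρ from by ring, le_div_iff₀ hρ0]
    linarith [hΦ]
  have hint1 : IntervalIntegrable (Gf f) MeasureTheory.volume s t :=
    (cont_Gf hf hf1).intervalIntegrable _ _
  have hint2 : IntervalIntegrable (fun ρ => (t * Gf f t) * ρ⁻¹) MeasureTheory.volume s t := by
    apply ContinuousOn.intervalIntegrable
    apply continuousOn_const.mul
    apply ContinuousOn.inv₀ continuousOn_id
    intro x hx
    rw [Set.uIcc_of_le (le_of_lt hst)] at hx
    exact ne_of_gt (lt_of_lt_of_le hs hx.1)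
  have hle := intervalIntegral.integral_mono_on (le_of_lt hst) hint1 hint2 hmono
  rw [intervalIntegral.integral_const_mul, integral_inv_of_pos hs ht, Real.log_div
    (ne_of_gt ht) (ne_of_gt hs)] at hle
  linarith [hFTC ▸ hle]

theorem posLog_le_half_log (x : ℝ) (hx : 0 ≤ x) :
    _root_.posLog x ≤ 1 / 2 * Real.log (1 + x ^ 2) := by
  unfold _root_.posLog
  apply max_le
  · rcases eq_or_lt_of_le hx with h | h
    · simp [← h]
    · have h2 : Real.log (x ^ 2) ≤ Real.log (1 + x ^ 2) :=
        Real.log_le_log (by positivity) (by nlinarith)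
      rw [Real.log_pow] at h2
      push_cast at h2
      linarith
  · have : (0:ℝ) ≤ Real.log (1 + x ^ 2) := Real.log_nonneg (by nlinarith)
    linarith

theorem half_log_le_posLog (x : ℝ) (hx : 0 ≤ x) :
    1 / 2 * Real.log (1 + x ^ 2) ≤ _root_.posLog x + 1 / 2 * Real.log 2 := by
  unfold _root_.posLog
  rcases le_or_gt x 1 with h | h
  · have h1 : Real.log (1 + x ^ 2) ≤ Real.log 2 := Real.log_le_log (by positivity) (by nlinarith)
    have h2 : (0:ℝ) ≤ max (Real.log x) 0 := le_max_right _ _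
    linarith
  · have hx0 : (0:ℝ) < x := lt_trans one_pos h
    have h0 : Real.log x ≤ max (Real.log x) 0 := le_max_left _ _
    have h1 : Real.log (1 + x ^ 2) ≤ Real.log (2 * x ^ 2) :=
      Real.log_le_log (by positivity) (by nlinarith)
    rw [Real.log_mul (by norm_num) (by positivity), Real.log_pow] at h1
    push_cast at h1
    linarith

theorem posLog_eq_log_max (x : ℝ) (hx : 0 ≤ x) : _root_.posLog x = Real.log (max x 1) := by
  unfold _root_.posLog
  rcases le_or_gt x 1 with h | h
  · rw [max_eq_right h, Real.log_one, max_eq_right (Real.log_nonpos hx h)]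
  · rw [max_eq_left (le_of_lt h), max_eq_left (Real.log_nonneg (le_of_lt h))]

end analytic5
section polar
open MeasureTheory intervalIntegral Complex Real

variable {f : ℂ → ℂ}

theorem ee_per : Function.Periodic ee (2 * π) := by
  intro θ
  unfold ee
  push_cast
  rw [add_mul, Complex.exp_add, Complex.exp_two_pi_mul_I, mul_one]

theorem polar_integral (hf : Differentiable ℂ f) (hf1 : Differentiable ℂ (deriv f))
    {t : ℝ} (ht : 0 < t) :
    ∫ z in Metric.ball (0:ℂ) t, Lf f z = ∫ ρ in (0:ℝ)..t, psif f ρ := by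
  have hπ := Real.pi_pos
  have hsymm : ∀ p : ℝ × ℝ, Complex.polarCoord.symm p = (p.1 : ℂ) * ee p.2 := by
    intro p
    rw [Complex.polarCoord_symm_apply]
    unfold ee
    rw [Complex.exp_mul_I, ← Complex.ofReal_cos, ← Complex.ofReal_sin]
  have hL : Continuous (Lf f) := cont_Lf_comp hf hf1 continuous_id
  set g : ℝ × ℝ → ℝ := fun p => p.1 * Lf f ((p.1 : ℂ) * ee p.2) with hgdef
  have hg : Continuous g := continuous_fst.mul (hL.comp cont_cc)
  have hA : ∫ z in Metric.ball (0:ℂ) t, Lf f z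
      = ∫ z, Set.indicator (Metric.ball (0:ℂ) t) (Lf f) z :=
    (MeasureTheory.integral_indicator Metric.isOpen_ball.measurableSet).symm
  rw [hA, ← Complex.integral_comp_polarCoord_symm]
  have hCeq : Set.EqOn
      (fun p : ℝ × ℝ => p.1 • Set.indicator (Metric.ball (0:ℂ) t) (Lf f)
        (Complex.polarCoord.symm p))
      (Set.indicator (Set.Iio t ×ˢ (Set.univ : Set ℝ)) g) polarCoord.target := by
    intro p hp
    rw [polarCoord_target] at hp
    have hp1 : 0 < p.1 := hp.1
    have habs : ‖Complex.polarCoord.symm p‖ = p.1 := by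
      rw [Complex.norm_polarCoord_symm, abs_of_pos hp1]
    by_cases hlt : p.1 < t
    · have hmem : Complex.polarCoord.symm p ∈ Metric.ball (0:ℂ) t := by
        rw [Metric.mem_ball, dist_zero_right, habs]
        exact hlt
      have hmem2 : p ∈ Set.Iio t ×ˢ (Set.univ : Set ℝ) := ⟨hlt, Set.mem_univ _⟩
      simp only [Set.indicator_of_mem hmem, Set.indicator_of_mem hmem2, hgdef]
      rw [hsymm]
      simp [smul_eq_mul]
    · have hmem : Complex.polarCoord.symm p ∉ Metric.ball (0:ℂ) t := by
        rw [Metric.mem_ball, dist_zero_right, habs]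
        exact hlt
      have hmem2 : p ∉ Set.Iio t ×ˢ (Set.univ : Set ℝ) := by
        simp [Set.mem_prod, hlt]
      simp only [Set.indicator_of_notMem hmem, Set.indicator_of_notMem hmem2, smul_zero]
  rw [setIntegral_congr_fun polarCoord.open_target.measurableSet hCeq,
    setIntegral_indicator (measurableSet_Iio.prod MeasurableSet.univ)]
  have hset : polarCoord.target ∩ (Set.Iio t ×ˢ (Set.univ : Set ℝ))
      = Set.Ioo 0 t ×ˢ Set.Ioo (-π) π := by
    rw [polarCoord_target]
    ext p
    simp only [Set.mem_inter_iff, Set.mem_prod, Set.mem_Ioi, Set.mem_Ioo, Set.mem_Iio,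
      Set.mem_univ, and_true]
    tauto
  rw [hset]
  have hg_int : IntegrableOn g (Set.Ioo 0 t ×ˢ Set.Ioo (-π) π)
      (MeasureTheory.volume.prod MeasureTheory.volume) := by
    rw [← MeasureTheory.Measure.volume_eq_prod ℝ ℝ]
    apply ((hg.continuousOn).integrableOn_compact
      ((isCompact_Icc (a := (0:ℝ)) (b := t)).prod
        (isCompact_Icc (a := -π) (b := π)))).mono_set
    exact Set.prod_mono Set.Ioo_subset_Icc_self Set.Ioo_subset_Icc_self
  rw [MeasureTheory.Measure.volume_eq_prod ℝ ℝ, MeasureTheory.setIntegral_prod g hg_int]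
  have hinner : ∀ ρ ∈ Set.Ioo (0:ℝ) t,
      ∫ θ in Set.Ioo (-π) π, g (ρ, θ) = psif f ρ := by
    intro ρ _
    rw [← MeasureTheory.integral_Ioc_eq_integral_Ioo,
      ← intervalIntegral.integral_of_le (by linarith : -π ≤ π)]
    have hper : Function.Periodic (fun θ => g (ρ, θ)) (2 * π) := by
      intro θ
      simp only [hgdef]
      rw [ee_per θ]
    have hshift := hper.intervalIntegral_add_eq (-π) 0
    rw [show -π + 2*π = π from by ring, zero_add] at hshift
    rw [hshift]
    unfold psif
    rw [← intervalIntegral.integral_const_mul]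
    apply intervalIntegral.integral_congr
    intro θ _
    simp only [hgdef, cc]
  rw [setIntegral_congr_fun measurableSet_Ioo hinner,
    ← MeasureTheory.integral_Ioc_eq_integral_Ioo,
    ← intervalIntegral.integral_of_le (le_of_lt ht)]

end polar
section final
open MeasureTheory intervalIntegral Complex Real

variable {f : ℂ → ℂ}

theorem huf_norm (f : ℂ → ℂ) (z : ℂ) : uf f z = 1 / 2 * Real.log (1 + ‖f z‖ ^ 2) := by
  unfold uf
  rw [Complex.normSq_eq_norm_sq]

theorem cont_posLog_norm (hf : Differentiable ℂ f) (r : ℝ) :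
    Continuous fun θ => _root_.posLog ‖f (cc r θ)‖ := by
  have h : (fun θ => _root_.posLog ‖f (cc r θ)‖) = fun θ => Real.log (max ‖f (cc r θ)‖ 1) :=
    funext fun θ => posLog_eq_log_max _ (norm_nonneg _)
  rw [h]
  apply Continuous.log
  · exact ((hf.continuous.comp (cont_cc.comp (continuous_const.prodMk continuous_id))).norm).max
      continuous_const
  · intro θ
    have : (1:ℝ) ≤ max ‖f (cc r θ)‖ 1 := le_max_right _ _
    linarith

theorem prox_le_Ff (hf : Differentiable ℂ f) (r : ℝ) :
    proximity f r ≤ (1 / (2 * π)) * Ff f r := by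
  have hπ := Real.pi_pos
  unfold proximity Ff
  apply mul_le_mul_of_nonneg_left _ (by positivity)
  apply intervalIntegral.integral_mono_on (by positivity)
  · exact (cont_posLog_norm hf r).intervalIntegrable _ _
  · exact (cont_uf_comp hf (cont_cc.comp
      (continuous_const.prodMk continuous_id))).intervalIntegrable _ _
  · intro θ _
    rw [huf_norm]
    exact posLog_le_half_log _ (norm_nonneg _)

theorem Ff_le_prox (hf : Differentiable ℂ f) (r : ℝ) :
    (1 / (2 * π)) * Ff f r ≤ proximity f r + 1 / 2 * Real.log 2 := by
  have hπ := Real.pi_pos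
  unfold proximity Ff
  have hle : ∫ θ in (0:ℝ)..(2*π), uf f (cc r θ)
      ≤ ∫ θ in (0:ℝ)..(2*π), (_root_.posLog ‖f (cc r θ)‖ + 1 / 2 * Real.log 2) := by
    apply intervalIntegral.integral_mono_on (by positivity)
    · exact (cont_uf_comp hf (cont_cc.comp
        (continuous_const.prodMk continuous_id))).intervalIntegrable _ _
    · exact ((cont_posLog_norm hf r).add continuous_const).intervalIntegrable _ _
    · intro θ _
      rw [huf_norm]
      exact half_log_le_posLog _ (norm_nonneg _)
  rw [intervalIntegral.integral_add ((cont_posLog_norm hf r).intervalIntegrable _ _)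
    intervalIntegrable_const, intervalIntegral.integral_const, smul_eq_mul] at hle
  have h2 : (1 / (2 * π)) * ((2 * π - 0) * (1 / 2 * Real.log 2)) = 1 / 2 * Real.log 2 := by
    rw [sub_zero]
    field_simp
  calc (1 / (2*π)) * ∫ θ in (0:ℝ)..(2*π), uf f (cc r θ)
      ≤ (1 / (2*π)) * ((∫ θ in (0:ℝ)..(2*π), _root_.posLog ‖f (cc r θ)‖)
          + (2 * π - 0) * (1 / 2 * Real.log 2)) := by
        apply mul_le_mul_of_nonneg_left hle (by positivity)
    _ = (1 / (2*π)) * (∫ θ in (0:ℝ)..(2*π), _root_.posLog ‖f (cc r θ)‖) + 1 / 2 * Real.log 2 := by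
        rw [mul_add, h2]

theorem stmt_14 (f : ℂ → ℂ) (hf : Differentiable ℂ f)
    (s t : ℝ) (hs : 0 < s) (hst : s < t) :
    Real.log (t / s) * sphArea f (Metric.ball (0 : ℂ) t) ≥
      proximity f t - proximity f s - Real.log 2 := by
  have hπ := Real.pi_pos
  have ht : 0 < t := lt_trans hs hst
  have hfa : AnalyticOnNhd ℂ f Set.univ := analyticOnNhd_univ_iff_differentiable.mpr hf
  have hf1 : Differentiable ℂ (deriv f) := analyticOnNhd_univ_iff_differentiable.mp hfa.deriv
  have hf1a : AnalyticOnNhd ℂ (deriv f) Set.univ := analyticOnNhd_univ_iff_differentiable.mpr hf1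
  have hf2 : Differentiable ℂ (deriv (deriv f)) :=
    analyticOnNhd_univ_iff_differentiable.mp hf1a.deriv
  have hdiff : Ff f t - Ff f s ≤ (t * Gf f t) * (Real.log t - Real.log s) :=
    Ff_diff_le hf hf1 hf2 hs hst
  have hPhi : t * Gf f t = ∫ z in Metric.ball (0:ℂ) t, Lf f z := by
    rw [Phi_eq hf hf1 hf2 ht, polar_integral hf hf1 ht]
  have hsph : sphArea f (Metric.ball (0:ℂ) t) = (1 / (2 * π)) * (t * Gf f t) := by
    rw [hPhi]
    unfold sphArea
    have h2 : ∫ z in Metric.ball (0:ℂ) t, Lf f z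
        = ∫ z in Metric.ball (0:ℂ) t, 2 * (‖deriv f z‖ ^ 2 / (1 + ‖f z‖ ^ 2) ^ 2) := by
      apply setIntegral_congr_fun Metric.isOpen_ball.measurableSet
      intro z _
      unfold Lf
      simp only [Complex.normSq_eq_norm_sq]
      ring
    rw [h2, MeasureTheory.integral_const_mul]
    field_simp
  have h1 := prox_le_Ff hf t
  have h2 := Ff_le_prox hf s
  have hmul := mul_le_mul_of_nonneg_left hdiff (by positivity : (0:ℝ) ≤ 1 / (2 * π))
  have hE : (1 / (2 * π)) * ((t * Gf f t) * (Real.log t - Real.log s))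
      = sphArea f (Metric.ball (0:ℂ) t) * (Real.log t - Real.log s) := by
    rw [hsph]; ring
  have hlog2 : (0:ℝ) ≤ 1 / 2 * Real.log 2 := by
    have := Real.log_nonneg (by norm_num : (1:ℝ) ≤ 2)
    linarith
  rw [ge_iff_le, Real.log_div (ne_of_gt ht) (ne_of_gt hs)]
  -- proximity f t - proximity f s - log 2 ≤ sphArea * (log t - log s)
  have hfinal : proximity f t - proximity f s
      ≤ sphArea f (Metric.ball (0:ℂ) t) * (Real.log t - Real.log s) + 1 / 2 * Real.log 2 := by
    have : (1 / (2 * π)) * Ff f t - (1 / (2 * π)) * Ff f s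
        ≤ sphArea f (Metric.ball (0:ℂ) t) * (Real.log t - Real.log s) := by
      rw [← hE]
      calc (1 / (2 * π)) * Ff f t - (1 / (2 * π)) * Ff f s
          = (1 / (2 * π)) * (Ff f t - Ff f s) := by ring
        _ ≤ (1 / (2 * π)) * ((t * Gf f t) * (Real.log t - Real.log s)) := hmul
    linarith
  have hlog2' : Real.log 2 ≥ 1 / 2 * Real.log 2 := by linarith
  linarith

end final
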